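/- Let n be an odd integer with n ≥ 5, T = {an + b(3n−2) + c(3n−1) : a,b,c ∈ ℕ}, F(T) = n(3n−7)/2 + 2, and S = T ∪ {F(T)}. Let L be an L-shape associated to Ap(S, F(T)), and let i be an integer with 3 ≤ i ≤ (n−1)/2. Set s_i = ((3n−5)/2)·n + (i−2)(3n−2) + (3n−1). Then L ∩ Z(s_i) ⊆ { ((3n−5)/2, i−2, 1), (0, (n−3)/2 + i, 0), ((3n−5)/2 − 3(i−2), 0, 2(i−2)+1) }. -/

import Mathlib

/-- The numerical semigroup `T = ⟨n, 3n-2, 3n-1⟩` as a subset of `ℕ`. -/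
def Tset (n : ℕ) : Set ℕ :=
  {s | ∃ a b c : ℕ, s = a * n + b * (3 * n - 2) + c * (3 * n - 1)}

/-- The Frobenius number of `T`, `F(T) = n(3n-7)/2 + 2` (exact division since `n` is odd). -/
def FT (n : ℕ) : ℕ := n * (3 * n - 7) / 2 + 2

/-- The numerical semigroup `S = T ∪ {F(T)} = ⟨n, 3n-2, 3n-1, F(T)⟩`. -/
def Sset (n : ℕ) : Set ℕ := Tset n ∪ {FT n}

/-- The Apéry set `Ap(S, F(T)) = {s ∈ S | s - F(T) ∉ S}`. -/
def Ap (n : ℕ) : Set ℕ := {s ∈ Sset n | ¬ ∃ t ∈ Sset n, t + FT n = s}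

/-- `phi n (x,y,z) = xn + y(3n-2) + z(3n-1)`. -/
def phi (n : ℕ) (p : ℕ × ℕ × ℕ) : ℕ :=
  p.1 * n + p.2.1 * (3 * n - 2) + p.2.2 * (3 * n - 1)

/-- The set of factorizations of `s` with respect to `(n, 3n-2, 3n-1)`. -/
def Zfac (n s : ℕ) : Set (ℕ × ℕ × ℕ) := {p | phi n p = s}

/-- `p` is the normal form of `s`: a factorization with `z < 2`, `y < (n+1)/2`,
`x < (3n-1)/2`. -/
def IsNF (n s : ℕ) (p : ℕ × ℕ × ℕ) : Prop :=
  p ∈ Zfac n s ∧ p.2.2 < 2 ∧ p.2.1 < (n + 1) / 2 ∧ p.1 < (3 * n - 1) / 2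

/-- `M_i`: elements of the Apéry set having exactly `i` factorizations. -/
def Mset (n i : ℕ) : Set ℕ := {s ∈ Ap n | (Zfac n s).ncard = i}

/-- `nf(M_i)`: normal forms of elements of `M_i`. -/
def nfM (n i : ℕ) : Set (ℕ × ℕ × ℕ) := {p | ∃ s ∈ Mset n i, IsNF n s p}

/-- An L-shape associated with `Ap(S, F(T))`: (C1) `phi` is a bijection from `L` onto the
Apéry set; (C2) `L` is downward closed for the componentwise order. -/
def IsLShape (n : ℕ) (L : Set (ℕ × ℕ × ℕ)) : Prop :=
  Set.BijOn (phi n) L (Ap n) ∧ ∀ u ∈ L, ∀ v : ℕ × ℕ × ℕ, v ≤ u → v ∈ L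

/-- The L-shape `F = F₁ ∪ F₂ ∪ F₃ ∪ F₄` (in `F₃`, `y ≤ (n-7)/2` is stated over the
integers as `2y + 7 ≤ n`, so that `F₃ = ∅` when `n = 5`). -/
def Fset (n : ℕ) : Set (ℕ × ℕ × ℕ) :=
  {p | p.2.2 = 0 ∧ p.1 ≤ (3 * n - 3) / 2 ∧ p.2.1 ≤ (n - 3) / 2} ∪
  {p | p.2.2 = 0 ∧ p.1 ≤ 1 ∧ p.2.1 = (n - 1) / 2} ∪
  {p | p.2.2 = 1 ∧ p.1 ≤ (3 * n - 3) / 2 ∧ 2 * p.2.1 + 7 ≤ n} ∪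
  {p | p.2.2 = 1 ∧ p.1 ≤ (3 * n - 5) / 2 ∧ p.2.1 = (n - 5) / 2}

/-- For an L-shape `L` and `3 ≤ i ≤ (n-1)/2`, the factorizations of
`s_i = ((3n-5)/2)n + (i-2)(3n-2) + (3n-1)` lying in `L` are among three candidates. -/
theorem stmt18 (n : ℕ) (hodd : Odd n) (hn : 5 ≤ n)
    (L : Set (ℕ × ℕ × ℕ)) (hL : IsLShape n L)
    (i : ℕ) (hi3 : 3 ≤ i) (hin : i ≤ (n - 1) / 2) :
    L ∩ Zfac n (((3 * n - 5) / 2) * n + (i - 2) * (3 * n - 2) + (3 * n - 1)) ⊆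
      {((3 * n - 5) / 2, i - 2, 1), (0, (n - 3) / 2 + i, 0),
       ((3 * n - 5) / 2 - 3 * (i - 2), 0, 2 * (i - 2) + 1)} := by
  obtain ⟨m, hm⟩ := hodd
  have hm2 : 2 ≤ m := by omega
  have hkm : i ≤ m := by omega
  rintro ⟨x, y, z⟩ ⟨hpL, hpZ⟩
  simp only [Zfac, Set.mem_setOf_eq, phi] at hpZ
  rw [show (3*n-5)/2 = 3*m-1 from by omega] at hpZ
  have c1 : 2 ≤ 3*n := by omega
  have c2 : 1 ≤ 3*n := by omega
  have c3 : 1 ≤ 3*m := by omega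
  have c4 : 2 ≤ i := by omega
  zify [c1, c2, c3, c4] at hpZ
  set k := i - 3 with hk
  have hnZ : (n:ℤ) = 2*m+1 := by omega
  have hiZ : (i:ℤ) = (k:ℤ) + 3 := by omega
  rw [hnZ, hiZ] at hpZ
  have hx0 : (0:ℤ) ≤ (x:ℤ) := by positivity
  have hy0 : (0:ℤ) ≤ (y:ℤ) := by positivity
  have hz0 : (0:ℤ) ≤ (z:ℤ) := by positivity
  have hmZ : (2:ℤ) ≤ (m:ℤ) := by exact_mod_cast hm2
  have hkZ : (k:ℤ) ≤ (m:ℤ) - 3 := by omega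
  -- bound on y + z
  have hb1 : ((y:ℤ)+z)*(6*m+1) ≤ (x:ℤ)*(2*(m:ℤ)+1) + (y:ℤ)*(3*(2*(m:ℤ)+1)-2) + (z:ℤ)*(3*(2*(m:ℤ)+1)-1) := by
    nlinarith [mul_nonneg hx0 (show (0:ℤ) ≤ 2*(m:ℤ)+1 by positivity)]
  have hb2 : (3*(m:ℤ)-1)*(2*(m:ℤ)+1) + ((k:ℤ)+3-2)*(3*(2*(m:ℤ)+1)-2) + (3*(2*(m:ℤ)+1)-1)
      < (2*(m:ℤ)+(k:ℤ)+3)*(6*(m:ℤ)+1) := by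
    nlinarith [sq_nonneg (m:ℤ)]
  have hb3 : (y:ℤ)+z < 2*(m:ℤ)+(k:ℤ)+3 := by
    have h := lt_of_le_of_lt (hpZ ▸ hb1) hb2
    exact (mul_lt_mul_iff_left₀ (show (0:ℤ) < 6*(m:ℤ)+1 by positivity)).mp h
  have hyzb : (y:ℤ)+z ≤ 2*(m:ℤ)+(k:ℤ)+2 := by omega
  -- key divisibility equation
  set D : ℤ := (x:ℤ)+3*(y:ℤ)+3*(z:ℤ) - (3*(m:ℤ)+3*(k:ℤ)+5) with hD
  have key : (2*(m:ℤ)+1) * D = 2*(y:ℤ)+(z:ℤ) - (2*(k:ℤ)+3) := by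
    rw [hD]; linear_combination hpZ
  have hub : D ≤ 1 := by
    by_contra hcon
    push_neg at hcon
    have h2 : (2*(m:ℤ)+1)*2 ≤ (2*(m:ℤ)+1)*D :=
      mul_le_mul_of_nonneg_left (by omega) (by positivity)
    linarith [key]
  have hlb : 0 ≤ D := by
    by_contra hcon
    push_neg at hcon
    have h2 : (2*(m:ℤ)+1)*D ≤ (2*(m:ℤ)+1)*(-1) :=
      mul_le_mul_of_nonneg_left (by omega) (by positivity)
    linarith [key]
  have hD01 : D = 0 ∨ D = 1 := by omega
  rcases hD01 with h0 | h1
  · -- 2y + z = 2k + 3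
    have e1 : 2*(y:ℤ)+(z:ℤ) = 2*(k:ℤ)+3 := by
      rw [h0, mul_zero] at key; linarith
    have e2 : (x:ℤ)+3*(y:ℤ)+3*(z:ℤ) = 3*(m:ℤ)+3*(k:ℤ)+5 := by
      rw [hD] at h0; linarith
    by_cases hyzc : 1 ≤ y ∧ 2 ≤ z
    · exfalso
      have hx3 : 3 ≤ x := by omega
      have hmem1 : ((3,1,0) : ℕ×ℕ×ℕ) ∈ L := by
        refine hL.2 (x,y,z) hpL (3,1,0) ?_
        rw [Prod.mk_le_mk, Prod.mk_le_mk]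
        omega
      have hmem2 : ((0,0,2) : ℕ×ℕ×ℕ) ∈ L := by
        refine hL.2 (x,y,z) hpL (0,0,2) ?_
        rw [Prod.mk_le_mk, Prod.mk_le_mk]
        omega
      have heq : ((3,1,0) : ℕ×ℕ×ℕ) = (0,0,2) := by
        refine hL.1.injOn hmem1 hmem2 ?_
        show phi n (3,1,0) = phi n (0,0,2)
        simp only [phi]
        omega
      simp at heq
    · simp only [Set.mem_insert_iff, Set.mem_singleton_iff, Prod.mk.injEq]
      omega
  · have e1 : 2*(y:ℤ)+(z:ℤ) = 2*(m:ℤ)+2*(k:ℤ)+4 := by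
      rw [h1, mul_one] at key; linarith
    have e2 : (x:ℤ)+3*(y:ℤ)+3*(z:ℤ) = 3*(m:ℤ)+3*(k:ℤ)+6 := by
      rw [hD] at h1; linarith
    simp only [Set.mem_insert_iff, Set.mem_singleton_iff, Prod.mk.injEq]
    omega
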